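/- (Guba) Every free group of finite rank is geometrically noetherian: for all natural numbers n and m and every set T ⊆ FreeGroup (Fin n), there exists a finite subset T₀ ⊆ T such that every group homomorphism μ : FreeGroup (Fin n) →* FreeGroup (Fin m) with μ w = 1 for all w ∈ T₀ also satisfies μ w = 1 for all w ∈ T. -/

import Mathlib

namespace Guba

variable (n : ℕ)

abbrev σ' (n : ℕ) := Fin n × Bool × Fin 2 × Fin 2

abbrev R0 (n : ℕ) := MvPolynomial (σ' n) ℤ

/-- generic matrix -/
noncomputable def Mmat (k : Fin n) : Matrix (Fin 2) (Fin 2) (R0 n) :=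
  Matrix.of fun i j => MvPolynomial.X (k, false, i, j)

/-- generic inverse matrix -/
noncomputable def Nmat (k : Fin n) : Matrix (Fin 2) (Fin 2) (R0 n) :=
  Matrix.of fun i j => MvPolynomial.X (k, true, i, j)

noncomputable def Jrel : Ideal (R0 n) :=
  Ideal.span ({x | ∃ k i j, x = (Mmat n k * Nmat n k) i j - (1 : Matrix (Fin 2) (Fin 2) (R0 n)) i j}
    ∪ {x | ∃ k i j, x = (Nmat n k * Mmat n k) i j - (1 : Matrix (Fin 2) (Fin 2) (R0 n)) i j})

abbrev S' (n : ℕ) := R0 n ⧸ Jrel n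

noncomputable def π' : R0 n →+* S' n := Ideal.Quotient.mk (Jrel n)

lemma one_entry_map {A B : Type*} [CommRing A] [CommRing B] (f : A →+* B) (i j : Fin 2) :
    f ((1 : Matrix (Fin 2) (Fin 2) A) i j) = (1 : Matrix (Fin 2) (Fin 2) B) i j := by
  by_cases h : i = j <;> simp [Matrix.one_apply, h]

noncomputable def Ugen (k : Fin n) : (Matrix (Fin 2) (Fin 2) (S' n))ˣ where
  val := (Mmat n k).map (π' n)
  inv := (Nmat n k).map (π' n)
  val_inv := by
    rw [← Matrix.map_mul]
    ext i j
    rw [Matrix.map_apply, ← one_entry_map (π' n) i j]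
    rw [π', Ideal.Quotient.eq]
    exact Ideal.subset_span (Or.inl ⟨k, i, j, rfl⟩)
  inv_val := by
    rw [← Matrix.map_mul]
    ext i j
    rw [Matrix.map_apply, ← one_entry_map (π' n) i j]
    rw [π', Ideal.Quotient.eq]
    exact Ideal.subset_span (Or.inr ⟨k, i, j, rfl⟩)

noncomputable def Φ : FreeGroup (Fin n) →* (Matrix (Fin 2) (Fin 2) (S' n))ˣ :=
  FreeGroup.lift (Ugen n)

def ents (F : Set (FreeGroup (Fin n))) : Set (S' n) :=
  {x | ∃ w ∈ F, ∃ i j, x = (Φ n w).val i j - (1 : Matrix (Fin 2) (Fin 2) (S' n)) i j}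

theorem key (T : Set (FreeGroup (Fin n))) :
    ∃ T₀ : Finset (FreeGroup (Fin n)), ↑T₀ ⊆ T ∧
      ∀ ν : FreeGroup (Fin n) →* (Matrix (Fin 2) (Fin 2) ℝ)ˣ,
        (∀ w ∈ T₀, ν w = 1) → ∀ w ∈ T, ν w = 1 := by
  classical
  -- maximal ideal among those spanned by entries of finite subsystems
  set 𝒮 : Set (Ideal (S' n)) :=
    {I | ∃ F : Finset (FreeGroup (Fin n)), ↑F ⊆ T ∧ I = Ideal.span (ents n ↑F)} with h𝒮
  have hne : 𝒮.Nonempty := ⟨Ideal.span (ents n (↑(∅ : Finset (FreeGroup (Fin n))))),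
    ⟨∅, by simp, rfl⟩⟩
  obtain ⟨I₀, hI₀mem, hmax⟩ :=
    set_has_maximal_iff_noetherian.mpr (inferInstance : IsNoetherian (S' n) (S' n)) 𝒮 hne
  obtain ⟨F₀, hF₀T, rfl⟩ := hI₀mem
  refine ⟨F₀, hF₀T, ?_⟩
  have hclaim : ∀ w ∈ T, ∀ i j,
      (Φ n w).val i j - (1 : Matrix (Fin 2) (Fin 2) (S' n)) i j ∈ Ideal.span (ents n ↑F₀) := by
    intro w hw i j
    have hsub : ents n ↑F₀ ⊆ ents n ↑(insert w F₀) := by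
      rintro x ⟨w', hw', i', j', rfl⟩
      exact ⟨w', by simp [hw'], i', j', rfl⟩
    have hle : Ideal.span (ents n ↑F₀) ≤ Ideal.span (ents n ↑(insert w F₀)) :=
      Ideal.span_mono hsub
    have hmem𝒮 : Ideal.span (ents n ↑(insert w F₀)) ∈ 𝒮 := by
      refine ⟨insert w F₀, ?_, rfl⟩
      intro x hx
      rcases Finset.mem_insert.mp (by exact_mod_cast hx) with h | h
      · exact h ▸ hw
      · exact hF₀T h
    have heq : Ideal.span (ents n ↑(insert w F₀)) = Ideal.span (ents n ↑F₀) :=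
      le_antisymm (by
        by_contra hgt
        exact hmax _ hmem𝒮 (lt_of_le_of_ne hle (fun h => hgt (le_of_eq h.symm)))) hle
    rw [← heq]
    exact Ideal.subset_span ⟨w, by simp, i, j, rfl⟩
  intro ν hν0 w hw
  -- evaluation homomorphism
  set ev0 : R0 n →+* ℝ := MvPolynomial.eval₂Hom (Int.castRingHom ℝ)
    (fun p => if p.2.1 then ((ν (FreeGroup.of p.1))⁻¹ : (Matrix (Fin 2) (Fin 2) ℝ)ˣ).val p.2.2.1 p.2.2.2
      else (ν (FreeGroup.of p.1) : (Matrix (Fin 2) (Fin 2) ℝ)ˣ).val p.2.2.1 p.2.2.2) with hev0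
  have hevM : ∀ k, (Mmat n k).map ev0 = (ν (FreeGroup.of k)).val := by
    intro k; ext i j
    simp [Mmat, hev0, Matrix.map_apply]
  have hevN : ∀ k, (Nmat n k).map ev0 = ((ν (FreeGroup.of k))⁻¹).val := by
    intro k; ext i j
    simp [Nmat, hev0, Matrix.map_apply]
  have hJ : ∀ a ∈ Jrel n, ev0 a = 0 := by
    have hker : Jrel n ≤ RingHom.ker ev0 := by
      rw [Jrel, Ideal.span_le]
      rintro x (⟨k, i, j, rfl⟩ | ⟨k, i, j, rfl⟩) <;> rw [SetLike.mem_coe, RingHom.mem_ker, map_sub]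
      · have h1 : ev0 ((Mmat n k * Nmat n k) i j)
            = ((Mmat n k).map ev0 * (Nmat n k).map ev0) i j := by
          rw [← Matrix.map_mul]; rfl
        rw [h1, hevM, hevN, one_entry_map ev0 i j, ← Units.val_mul, mul_inv_cancel,
          Units.val_one, sub_self]
      · have h1 : ev0 ((Nmat n k * Mmat n k) i j)
            = ((Nmat n k).map ev0 * (Mmat n k).map ev0) i j := by
          rw [← Matrix.map_mul]; rfl
        rw [h1, hevM, hevN, one_entry_map ev0 i j, ← Units.val_mul, inv_mul_cancel,
          Units.val_one, sub_self]
    exact fun a ha => hker ha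
  set ev : S' n →+* ℝ := Ideal.Quotient.lift (Jrel n) ev0 hJ with hevdef
  have hevπ : ∀ a, ev (π' n a) = ev0 a := fun a => Ideal.Quotient.lift_mk (Jrel n) ev0 hJ
  -- the evaluated word equals ν
  have hcomm : ∀ u, ((Φ n u).val).map ev = (ν u).val := by
    have hΨ : (Units.map ev.mapMatrix.toMonoidHom).comp (Φ n) = ν := by
      apply FreeGroup.ext_hom
      intro k
      apply Units.ext
      show ev.mapMatrix ((Φ n (FreeGroup.of k)).val) = (ν (FreeGroup.of k)).val
      rw [Φ, FreeGroup.lift_apply_of]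
      show ev.mapMatrix (((Mmat n k).map (π' n))) = _
      rw [RingHom.mapMatrix_apply, Matrix.map_map]
      have : (⇑ev ∘ ⇑(π' n)) = ⇑ev0 := funext hevπ
      rw [this, hevM]
    intro u
    have := DFunLike.congr_fun hΨ u
    have h2 := congrArg Units.val this
    simpa [RingHom.mapMatrix_apply] using h2
  -- conclude
  apply Units.ext
  show (ν w).val = (1 : Matrix (Fin 2) (Fin 2) ℝ)
  rw [← hcomm w]
  have hker : Ideal.span (ents n ↑F₀) ≤ RingHom.ker ev := by
    rw [Ideal.span_le]
    rintro x ⟨w', hw', i, j, rfl⟩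
    rw [SetLike.mem_coe, RingHom.mem_ker, map_sub]
    have h1 : ev ((Φ n w').val i j) = ((Φ n w').val.map ev) i j := rfl
    rw [h1, hcomm w', hν0 w' hw', one_entry_map ev i j, Units.val_one, sub_self]
  ext i j
  have hmem := hker (hclaim w hw i j)
  rw [RingHom.mem_ker, map_sub, one_entry_map ev i j] at hmem
  have : ev ((Φ n w).val i j) = (1 : Matrix (Fin 2) (Fin 2) ℝ) i j := by linarith [sub_eq_zero.mp hmem]
  simpa [Matrix.map_apply] using this

end Guba
namespace Guba2

abbrev V := {v : Fin 2 → ℝ // v ≠ 0}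

noncomputable instance instSMulV : SMul (Matrix (Fin 2) (Fin 2) ℝ)ˣ V where
  smul g v := ⟨(g : Matrix (Fin 2) (Fin 2) ℝ).mulVec v.1, by
    intro h
    apply v.2
    have h2 := congrArg ((g⁻¹ : (Matrix (Fin 2) (Fin 2) ℝ)ˣ) : Matrix (Fin 2) (Fin 2) ℝ).mulVec h
    rwa [Matrix.mulVec_mulVec, Units.inv_mul, Matrix.one_mulVec, Matrix.mulVec_zero] at h2⟩

lemma smul_def' (g : (Matrix (Fin 2) (Fin 2) ℝ)ˣ) (v : V) :
    (g • v).1 = (g : Matrix (Fin 2) (Fin 2) ℝ).mulVec v.1 := rfl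

noncomputable instance : MulAction (Matrix (Fin 2) (Fin 2) ℝ)ˣ V where
  one_smul v := Subtype.ext (by rw [smul_def']; simp)
  mul_smul g h v := Subtype.ext (by
    rw [smul_def', smul_def', smul_def', Units.val_mul, ← Matrix.mulVec_mulVec])

lemma smul_def (g : (Matrix (Fin 2) (Fin 2) ℝ)ˣ) (v : V) :
    (g • v).1 = (g : Matrix (Fin 2) (Fin 2) ℝ).mulVec v.1 := rfl

/-- the hyperbolic matrix with attracting slope `t`, repelling slope `t+1/2`,
eigenvalues 32 and 1. -/
noncomputable def pm (t : ℝ) : Matrix (Fin 2) (Fin 2) ℝ :=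
  !![62*t + 32, -62; 62*t^2 + 31*t, -62*t + 1]

noncomputable def pminv (t : ℝ) : Matrix (Fin 2) (Fin 2) ℝ :=
  !![(-62*t + 1)/32, 62/32; (-62*t^2 - 31*t)/32, (62*t + 32)/32]

noncomputable def aunit (t : ℝ) : (Matrix (Fin 2) (Fin 2) ℝ)ˣ where
  val := pm t
  inv := pminv t
  val_inv := by
    ext i j
    fin_cases i <;> fin_cases j <;>
      simp [pm, pminv, Matrix.mul_apply, Fin.sum_univ_two, Matrix.one_apply] <;> ring
  inv_val := by
    ext i j
    fin_cases i <;> fin_cases j <;>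
      simp [pm, pminv, Matrix.mul_apply, Fin.sum_univ_two, Matrix.one_apply] <;> ring

/-- cone of slope within 1/8 of `c` -/
def cone (c : ℝ) : Set V := {v | |v.1 1 - c * v.1 0| ≤ |v.1 0| / 8}

lemma cone_disjoint {c c' : ℝ} (h : 1/2 ≤ |c - c'|) : Disjoint (cone c) (cone c') := by
  rw [Set.disjoint_left]
  rintro ⟨v, hv⟩ h1 h2
  simp only [cone, Set.mem_setOf_eq] at h1 h2
  have hx0 : v 0 = 0 := by
    have h3 : |c - c'| * |v 0| ≤ |v 0| / 4 := by
      have := abs_sub_abs_le_abs_sub (v 1 - c' * v 0) (v 1 - c * v 0)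
      have h4 : |(v 1 - c' * v 0) - (v 1 - c * v 0)| = |c - c'| * |v 0| := by
        rw [← abs_mul]; ring_nf
      calc |c - c'| * |v 0| = |(v 1 - c' * v 0) - (v 1 - c * v 0)| := h4.symm
        _ ≤ |v 1 - c' * v 0| + |v 1 - c * v 0| := abs_sub _ _
        _ ≤ |v 0| / 8 + |v 0| / 8 := add_le_add h2 h1
        _ = |v 0| / 4 := by ring
    nlinarith [abs_nonneg (v 0), le_abs_self (v 0), neg_abs_le (v 0)]
  have hx1 : v 1 = 0 := by
    rw [hx0] at h1
    simp at h1
    nlinarith [abs_nonneg (v 1), le_abs_self (v 1), neg_abs_le (v 1), h1]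
  apply hv
  funext i
  fin_cases i <;> simpa [hx0, hx1]

end Guba2

namespace Part2

open Guba2

lemma mulVec2 (M : Matrix (Fin 2) (Fin 2) ℝ) (x : Fin 2 → ℝ) (i : Fin 2) :
    (M.mulVec x) i = M i 0 * x 0 + M i 1 * x 1 := by
  simp [Matrix.mulVec, dotProduct, Fin.sum_univ_two]

lemma core1 (t x0 x1 : ℝ) (h : ¬ |x1 - (t + 1/2) * x0| ≤ |x0| / 8) :
    |((62*t^2 + 31*t) * x0 + (-62*t + 1) * x1) - t * ((62*t + 32) * x0 + (-62) * x1)|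
      ≤ |(62*t + 32) * x0 + (-62) * x1| / 8 := by
  set a := (2*t + 1) * x0 - 2*x1 with ha
  set b := 2*x1 - 2*t*x0 with hb
  have e1 : x1 - (t + 1/2) * x0 = -(a/2) := by simp only [ha, hb]; ring
  have e0 : x0 = a + b := by simp only [ha, hb]; ring
  have e2 : ((62*t^2 + 31*t) * x0 + (-62*t + 1) * x1) - t * ((62*t + 32) * x0 + (-62) * x1)
      = b/2 := by simp only [ha, hb]; ring
  have e3 : (62*t + 32) * x0 + (-62) * x1 = 32*a + b := by simp only [ha, hb]; ring
  rw [e2, e3]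
  rw [e1] at h
  nth_rewrite 1 [e0] at h
  have h' : |a + b| < 4 * |a| := by
    rw [not_le] at h
    rw [abs_neg, abs_div] at h
    simp only [abs_two] at h
    nlinarith [abs_nonneg (a+b), abs_nonneg a]
  have hB : |b| ≤ |a + b| + |a| := by
    calc |b| = |(a + b) - a| := by ring_nf
    _ ≤ |a + b| + |a| := abs_sub _ _
  have hA : 32 * |a| ≤ |32*a + b| + |b| := by
    have : |32*a| = 32 * |a| := by rw [abs_mul]; norm_num
    calc 32 * |a| = |32*a| := this.symm
    _ = |(32*a + b) - b| := by ring_nf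
    _ ≤ |32*a + b| + |b| := abs_sub _ _
  have h2 : |b/2| = |b|/2 := by rw [abs_div]; norm_num
  rw [h2]
  linarith [abs_nonneg a, abs_nonneg b, abs_nonneg (a+b), abs_nonneg (32*a+b)]

lemma core2 (t x0 x1 : ℝ) (h : ¬ |x1 - t * x0| ≤ |x0| / 8) :
    |(((-62*t^2 - 31*t)/32) * x0 + ((62*t + 32)/32) * x1)
        - (t + 1/2) * (((-62*t + 1)/32) * x0 + (62/32) * x1)|
      ≤ |((-62*t + 1)/32) * x0 + (62/32) * x1| / 8 := by
  set a := (2*t + 1) * x0 - 2*x1 with ha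
  set b := 2*x1 - 2*t*x0 with hb
  have e1 : x1 - t * x0 = b/2 := by simp only [ha, hb]; ring
  have e0 : x0 = a + b := by simp only [ha, hb]; ring
  have e2 : (((-62*t^2 - 31*t)/32) * x0 + ((62*t + 32)/32) * x1)
      - (t + 1/2) * (((-62*t + 1)/32) * x0 + (62/32) * x1) = -(a/64) := by simp only [ha, hb]; ring
  have e3 : ((-62*t + 1)/32) * x0 + (62/32) * x1 = a/32 + b := by simp only [ha, hb]; ring
  rw [e2, e3]
  rw [e1] at h
  nth_rewrite 1 [e0] at h
  have h' : |a + b| < 4 * |b| := by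
    rw [not_le, abs_div] at h
    simp only [abs_two] at h
    nlinarith [abs_nonneg (a+b), abs_nonneg b]
  have hA : |a| ≤ |a + b| + |b| := by
    calc |a| = |(a + b) - b| := by ring_nf
    _ ≤ |a + b| + |b| := abs_sub _ _
  have hB : |b| ≤ |a/32 + b| + |a|/32 := by
    have : |a/32| = |a|/32 := by rw [abs_div]; norm_num
    calc |b| = |(a/32 + b) - a/32| := by ring_nf
    _ ≤ |a/32 + b| + |a/32| := abs_sub _ _
    _ = |a/32 + b| + |a|/32 := by rw [this]
  have h2 : |-(a/64)| = |a|/64 := by rw [abs_neg, abs_div]; norm_num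
  rw [h2]
  linarith [abs_nonneg a, abs_nonneg b, abs_nonneg (a+b), abs_nonneg (a/32+b)]

end Part2

namespace Part2
open Guba2

lemma pm_e (t : ℝ) : (pm t 0 0 = 62*t + 32 ∧ pm t 0 1 = -62) ∧
    (pm t 1 0 = 62*t^2 + 31*t ∧ pm t 1 1 = -62*t + 1) := by
  refine ⟨⟨?_, ?_⟩, ?_, ?_⟩ <;> simp [pm]

lemma pminv_e (t : ℝ) : (pminv t 0 0 = (-62*t + 1)/32 ∧ pminv t 0 1 = 62/32) ∧
    (pminv t 1 0 = (-62*t^2 - 31*t)/32 ∧ pminv t 1 1 = (62*t + 32)/32) := by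
  refine ⟨⟨?_, ?_⟩, ?_, ?_⟩ <;> simp [pminv]

lemma mem_cone {c : ℝ} {v : V} : v ∈ cone c ↔ |v.1 1 - c * v.1 0| ≤ |v.1 0| / 8 := Iff.rfl

lemma dist1 {p q : ℕ} (h : p ≠ q) : 1/2 ≤ |(p:ℝ) - q| := by
  have h1 : (1:ℤ) ≤ |(p:ℤ) - q| := Int.one_le_abs (sub_ne_zero.mpr (by exact_mod_cast h))
  have h2 : ((|(p:ℤ) - (q:ℤ)| : ℤ) : ℝ) = |(p:ℝ) - q| := by push_cast; rfl
  have h3 : (1:ℝ) ≤ |(p:ℝ) - q| := by rw [← h2]; exact_mod_cast h1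
  linarith

lemma dist2 (p q : ℕ) : 1/2 ≤ |(p:ℝ) - ((q:ℝ) + 1/2)| := by
  rcases le_or_gt p q with h | h
  · have h' : (p:ℝ) ≤ q := by exact_mod_cast h
    rw [abs_of_nonpos (by linarith)]; linarith
  · have h' : (q:ℝ) + 1 ≤ p := by exact_mod_cast h
    rw [abs_of_nonneg (by linarith)]; linarith

theorem exists_inj_pp (m : ℕ) :
    ∃ φ : FreeGroup (Fin (m+2)) →* (Matrix (Fin 2) (Fin 2) ℝ)ˣ, Function.Injective φ := by
  refine ⟨FreeGroup.lift (fun i : Fin (m+2) => aunit ((i : ℕ) : ℝ)), ?_⟩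
  apply FreeGroup.injective_lift_of_ping_pong _
    (fun i : Fin (m+2) => cone ((i : ℕ) : ℝ))
    (fun i : Fin (m+2) => cone (((i : ℕ) : ℝ) + 1/2))
  · -- nonempty
    intro i
    refine ⟨⟨![1, ((i:ℕ):ℝ)], ?_⟩, ?_⟩
    · intro h; have := congrFun h 0; simp at this
    · rw [mem_cone]
      simp
  · -- X disjoint
    intro i j hij
    exact cone_disjoint (dist1 (fun h => hij (Fin.ext h)))
  · -- Y disjoint
    intro i j hij
    have : 1/2 ≤ |(((i:ℕ):ℝ) + 1/2) - (((j:ℕ):ℝ) + 1/2)| := by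
      rw [show (((i:ℕ):ℝ) + 1/2) - (((j:ℕ):ℝ) + 1/2) = ((i:ℕ):ℝ) - ((j:ℕ):ℝ) from by ring]
      exact dist1 (fun h => hij (Fin.ext h))
    exact cone_disjoint this
  · -- X vs Y
    intro i j
    exact cone_disjoint (dist2 _ _)
  · -- hX
    intro i
    rintro x ⟨v, hv, rfl⟩
    have hv' : ¬ |v.1 1 - (((i:ℕ):ℝ) + 1/2) * v.1 0| ≤ |v.1 0| / 8 := hv
    show (aunit _ • v) ∈ cone _
    rw [mem_cone, smul_def']
    show |((pm _).mulVec v.1) 1 - _ * ((pm _).mulVec v.1) 0| ≤ |((pm _).mulVec v.1) 0| / 8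
    rw [mulVec2, mulVec2, (pm_e _).1.1, (pm_e _).1.2, (pm_e _).2.1, (pm_e _).2.2]
    exact core1 _ _ _ hv'
  · -- hY
    intro i
    rintro x ⟨v, hv, rfl⟩
    have hv' : ¬ |v.1 1 - ((i:ℕ):ℝ) * v.1 0| ≤ |v.1 0| / 8 := hv
    show ((fun i : Fin (m+2) => aunit ((i : ℕ) : ℝ))⁻¹ i • v) ∈ cone _
    rw [mem_cone]
    have hinv : (((fun i : Fin (m+2) => aunit ((i : ℕ) : ℝ))⁻¹ i : (Matrix (Fin 2) (Fin 2) ℝ)ˣ) :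
        Matrix (Fin 2) (Fin 2) ℝ) = pminv ((i:ℕ):ℝ) := rfl
    rw [smul_def', hinv]
    rw [mulVec2, mulVec2, (pminv_e _).1.1, (pminv_e _).1.2, (pminv_e _).2.1, (pminv_e _).2.2]
    exact core2 _ _ _ hv'

end Part2

namespace Part2

lemma freeGroup_zero_eq_one (x : FreeGroup (Fin 0)) : x = 1 := by
  induction x using FreeGroup.induction_on with
  | C1 => rfl
  | of a => exact a.elim0
  | inv_of a h => rw [h]; simp
  | mul x y hx hy => rw [hx, hy, one_mul]

lemma exists_inj_all (m : ℕ) :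
    ∃ φ : FreeGroup (Fin m) →* (Matrix (Fin 2) (Fin 2) ℝ)ˣ, Function.Injective φ := by
  obtain ⟨ψ, hψ⟩ := exists_inj_pp m
  refine ⟨ψ.comp (FreeGroup.map (Fin.castLE (by omega : m ≤ m + 2))), ?_⟩
  rcases Nat.eq_zero_or_pos m with rfl | hm
  · intro x y _
    rw [freeGroup_zero_eq_one x, freeGroup_zero_eq_one y]
  · refine hψ.comp ?_
    set r : Fin (m+2) → Fin m :=
      fun j => if h : (j:ℕ) < m then (⟨j, h⟩ : Fin m) else ⟨0, hm⟩ with hr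
    have hli : ∀ x : Fin m, r (Fin.castLE (by omega : m ≤ m + 2) x) = x := by
      intro x
      simp only [hr, Fin.castLE]
      rw [dif_pos x.2]
    intro x y hxy
    have h2 := congrArg (FreeGroup.map r) hxy
    rw [FreeGroup.map.comp, FreeGroup.map.comp] at h2
    rw [show (r ∘ Fin.castLE (by omega : m ≤ m + 2)) = id from funext hli] at h2
    rwa [FreeGroup.map.id, FreeGroup.map.id] at h2

end Part2


/-- Guba: every free group of finite rank is geometrically
noetherian: every system of equations `{w = 1 : w ∈ T}` over a free group of
finite rank is equivalent, over any free group of finite rank, to a finite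
subsystem. -/
theorem freeGroup_geometrically_noetherian (n m : ℕ)
    (T : Set (FreeGroup (Fin n))) :
    ∃ T₀ : Finset (FreeGroup (Fin n)), ↑T₀ ⊆ T ∧
      ∀ μ : FreeGroup (Fin n) →* FreeGroup (Fin m),
        (∀ w ∈ T₀, μ w = 1) → ∀ w ∈ T, μ w = 1 := by
  obtain ⟨T₀, hT₀, hkey⟩ := Guba.key n T
  obtain ⟨φ, hφ⟩ := Part2.exists_inj_all m
  refine ⟨T₀, hT₀, fun μ hμ w hw => ?_⟩
  apply hφ
  rw [map_one]
  exact hkey (φ.comp μ)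
    (fun w' hw' => by simp only [MonoidHom.comp_apply, hμ w' hw', map_one]) w hw
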